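/- Let S = K[x_1,...,x_4] and I = ((x_1x_2)^{w_1}, x_2x_3, (x_3x_4)^{w_3}) with w_1 ≥ w_3 ≥ 2. Then for any t ≥ 2, the colon ideal (I^t : (x_2 x_3)^{t-1}) equals I. -/

import Mathlib

open MvPolynomial

noncomputable abbrev P4eA (w1 : ℕ) : Fin 4 →₀ ℕ := w1 • (Finsupp.single 0 1 + Finsupp.single 1 1)
noncomputable abbrev P4eB : Fin 4 →₀ ℕ := Finsupp.single 1 1 + Finsupp.single 2 1
noncomputable abbrev P4eC (w3 : ℕ) : Fin 4 →₀ ℕ := w3 • (Finsupp.single 2 1 + Finsupp.single 3 1)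

def P4Good (w1 w3 n : ℕ) (d : Fin 4 →₀ ℕ) : Prop :=
  ∃ i j k, i + j + k = n ∧ i • P4eA w1 + j • P4eB + k • P4eC w3 ≤ d

lemma P4Good.mono {w1 w3 n : ℕ} {d d' : Fin 4 →₀ ℕ} (h : P4Good w1 w3 n d) (hdd : d ≤ d') :
    P4Good w1 w3 n d' := by
  obtain ⟨i, j, k, hn, hle⟩ := h
  exact ⟨i, j, k, hn, hle.trans hdd⟩

lemma P4Good.add {w1 w3 m n : ℕ} {d e : Fin 4 →₀ ℕ} (hd : P4Good w1 w3 m d)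
    (he : P4Good w1 w3 n e) : P4Good w1 w3 (m + n) (d + e) := by
  obtain ⟨i, j, k, hn, hle⟩ := hd
  obtain ⟨i', j', k', hn', hle'⟩ := he
  refine ⟨i + i', j + j', k + k', by omega, ?_⟩
  have h2 := add_le_add hle hle'
  refine le_trans (le_of_eq ?_) h2
  simp only [add_smul]
  abel

/-- The monomial ideal of polynomials all of whose monomials are divisible by a
degree-`n` product of the three generators. -/
def P4J (K : Type) [Field K] (w1 w3 n : ℕ) : Ideal (MvPolynomial (Fin 4) K) where
  carrier := {f | ∀ d ∈ f.support, P4Good w1 w3 n d}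
  zero_mem' := by simp
  add_mem' := by
    intro f g hf hg d hd
    rcases Finset.mem_union.mp (MvPolynomial.support_add hd) with h | h
    · exact hf d h
    · exact hg d h
  smul_mem' := by
    intro c f hf d hd
    rw [smul_eq_mul] at hd
    obtain ⟨a, ha, b, hb, rfl⟩ := Finset.mem_add.mp (MvPolynomial.support_mul c f hd)
    exact (hf b hb).mono (self_le_add_left _ _)

lemma P4mul_J_le {K : Type} [Field K] {w1 w3 m n : ℕ} :
    P4J K w1 w3 m * P4J K w1 w3 n ≤ P4J K w1 w3 (m + n) := by
  rw [Ideal.mul_le]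
  intro f hf g hg d hd
  obtain ⟨a, ha, b, hb, rfl⟩ := Finset.mem_add.mp (MvPolynomial.support_mul f g hd)
  exact (hf a ha).add (hg b hb)

lemma P4gen_a (K : Type) [Field K] (w1 : ℕ) :
    ((X 0 * X 1 : MvPolynomial (Fin 4) K)) ^ w1 = monomial (P4eA w1) 1 := by
  rw [X, X, monomial_mul, monomial_pow]; simp

lemma P4gen_b (K : Type) [Field K] :
    (X 1 * X 2 : MvPolynomial (Fin 4) K) = monomial P4eB 1 := by
  rw [X, X, monomial_mul]; simp

lemma P4gen_c (K : Type) [Field K] (w3 : ℕ) :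
    ((X 2 * X 3 : MvPolynomial (Fin 4) K)) ^ w3 = monomial (P4eC w3) 1 := by
  rw [X, X, monomial_mul, monomial_pow]; simp

lemma P4span_le_J (K : Type) [Field K] (w1 w3 : ℕ)
    (I : Ideal (MvPolynomial (Fin 4) K))
    (hI : I = Ideal.span {(X 0 * X 1) ^ w1, X 1 * X 2, (X 2 * X 3) ^ w3}) :
    I ≤ P4J K w1 w3 1 := by
  classical
  rw [hI, Ideal.span_le]
  rintro g hg
  simp only [Set.mem_insert_iff, Set.mem_singleton_iff] at hg
  rcases hg with rfl | rfl | rfl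
  · rw [P4gen_a]
    intro d hd
    rw [support_monomial, if_neg one_ne_zero, Finset.mem_singleton] at hd
    subst hd
    exact ⟨1, 0, 0, by omega, by simp⟩
  · rw [P4gen_b]
    intro d hd
    rw [support_monomial, if_neg one_ne_zero, Finset.mem_singleton] at hd
    subst hd
    exact ⟨0, 1, 0, by omega, by simp⟩
  · rw [P4gen_c]
    intro d hd
    rw [support_monomial, if_neg one_ne_zero, Finset.mem_singleton] at hd
    subst hd
    exact ⟨0, 0, 1, by omega, by simp⟩

lemma P4pow_le_J (K : Type) [Field K] (w1 w3 : ℕ)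
    (I : Ideal (MvPolynomial (Fin 4) K))
    (hI : I = Ideal.span {(X 0 * X 1) ^ w1, X 1 * X 2, (X 2 * X 3) ^ w3}) :
    ∀ n, I ^ n ≤ P4J K w1 w3 n := by
  intro n
  induction n with
  | zero =>
    intro f _ d _
    exact ⟨0, 0, 0, by omega, by simp⟩
  | succ n ih =>
    rw [pow_succ]
    calc I ^ n * I ≤ P4J K w1 w3 n * P4J K w1 w3 1 :=
          Ideal.mul_mono ih (P4span_le_J K w1 w3 I hI)
      _ ≤ P4J K w1 w3 (n + 1) := P4mul_J_le

lemma P4arith (w1 w3 t i j k e0 e1 e2 e3 : ℕ) (hw3 : 2 ≤ w3) (h13 : w3 ≤ w1)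
    (ht : 2 ≤ t) (hijk : i + j + k = t)
    (h0 : w1 * i ≤ e0) (h1 : w1 * i + j ≤ e1 + (t-1))
    (h2 : j + w3 * k ≤ e2 + (t-1)) (h3 : w3 * k ≤ e3) :
    (w1 ≤ e0 ∧ w1 ≤ e1) ∨ (1 ≤ e1 ∧ 1 ≤ e2) ∨ (w3 ≤ e2 ∧ w3 ≤ e3) := by
  by_cases he1 : 1 ≤ e1
  · by_cases he2 : 1 ≤ e2
    · exact Or.inr (Or.inl ⟨he1, he2⟩)
    · left
      have he2' : e2 = 0 := by omega
      subst he2'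
      have hik : w3 * k + 1 ≤ i + k := by omega
      have hki : k + 1 ≤ i := by nlinarith
      have key : w1 + i + k ≤ w1 * i + 1 := by
        obtain ⟨i', rfl⟩ : ∃ i', i = i' + 1 := ⟨i - 1, by omega⟩
        obtain ⟨w', rfl⟩ : ∃ w', w1 = w' + 2 := ⟨w1 - 2, by omega⟩
        have hk' : k ≤ i' := by omega
        nlinarith
      exact ⟨by omega, by omega⟩
  · right; right
    have he1' : e1 = 0 := by omega
    subst he1'
    have hik : w1 * i + 1 ≤ i + k := by omega
    have hki : i + 1 ≤ k := by nlinarith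
    have key : w3 + i + k ≤ w3 * k + 1 := by
      obtain ⟨k', rfl⟩ : ∃ k', k = k' + 1 := ⟨k - 1, by omega⟩
      obtain ⟨w', rfl⟩ : ∃ w', w3 = w' + 2 := ⟨w3 - 2, by omega⟩
      have hi' : i ≤ k' := by omega
      nlinarith
    have hw3k : w3 ≤ w3 * k := by nlinarith
    exact ⟨by omega, by omega⟩

lemma P4key (w1 w3 : ℕ) (hw3 : 2 ≤ w3) (h13 : w3 ≤ w1) (t : ℕ) (ht : 2 ≤ t)
    (e : Fin 4 →₀ ℕ) (h : P4Good w1 w3 t (e + (t - 1) • P4eB)) :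
    P4eA w1 ≤ e ∨ P4eB ≤ e ∨ P4eC w3 ≤ e := by
  obtain ⟨i, j, k, hn, hle⟩ := h
  rw [Finsupp.le_def] at hle
  have h0 := hle 0; have h1 := hle 1; have h2 := hle 2; have h3 := hle 3
  simp [Finsupp.single_apply] at h0 h1 h2 h3
  have hc1 : w1 * i = i * w1 := mul_comm _ _
  have hc2 : w3 * k = k * w3 := mul_comm _ _
  have h0' : w1 * i ≤ e 0 := by omega
  have h1' : w1 * i + j ≤ e 1 + (t - 1) := by omega
  have h2' : j + w3 * k ≤ e 2 + (t - 1) := by omega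
  have h3' : w3 * k ≤ e 3 := by omega
  rcases P4arith w1 w3 t i j k (e 0) (e 1) (e 2) (e 3) hw3 h13 ht hn h0' h1' h2' h3'
    with ⟨ha0, ha1⟩ | ⟨hb1, hb2⟩ | ⟨hc2, hc3⟩
  · left
    rw [Finsupp.le_def]
    intro x
    fin_cases x <;> simp [Finsupp.single_apply] <;> omega
  · right; left
    rw [Finsupp.le_def]
    intro x
    fin_cases x <;> simp [Finsupp.single_apply] <;> omega
  · right; right
    rw [Finsupp.le_def]
    intro x
    fin_cases x <;> simp [Finsupp.single_apply] <;> omega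

lemma P4mono_mem (K : Type) [Field K] {d g : Fin 4 →₀ ℕ} (hg : g ≤ d) (c : K)
    {I : Ideal (MvPolynomial (Fin 4) K)}
    (hmem : (monomial g 1 : MvPolynomial (Fin 4) K) ∈ I) :
    (monomial d c : MvPolynomial (Fin 4) K) ∈ I := by
  have : (monomial d c : MvPolynomial (Fin 4) K) = monomial (d - g) c * monomial g 1 := by
    rw [monomial_mul, mul_one, tsub_add_cancel_of_le hg]
  rw [this]
  exact Ideal.mul_mem_left _ _ hmem

/-- for `I = ((x_1x_2)^{w_1}, x_2x_3, (x_3x_4)^{w_3})` with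
`w_1 ≥ w_3 ≥ 2`, `(I^t : (x_2x_3)^{t-1}) = I` for all `t ≥ 2`. -/
theorem path4_colon_middle_power (K : Type) [Field K] (w1 w3 : ℕ)
    (hw3 : 2 ≤ w3) (h13 : w3 ≤ w1) (t : ℕ) (ht : 2 ≤ t)
    (I : Ideal (MvPolynomial (Fin 4) K))
    (hI : I = Ideal.span {(X 0 * X 1) ^ w1, X 1 * X 2, (X 2 * X 3) ^ w3}) :
    (I ^ t).colon ((Ideal.span {(X 1 * X 2) ^ (t - 1)} : Ideal (MvPolynomial (Fin 4) K)) : Set (MvPolynomial (Fin 4) K)) = I := by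
  have haI : ((X 0 * X 1 : MvPolynomial (Fin 4) K)) ^ w1 ∈ I := by
    rw [hI]; exact Ideal.subset_span (by simp)
  have hbI : (X 1 * X 2 : MvPolynomial (Fin 4) K) ∈ I := by
    rw [hI]; exact Ideal.subset_span (by simp)
  have hcI : ((X 2 * X 3 : MvPolynomial (Fin 4) K)) ^ w3 ∈ I := by
    rw [hI]; exact Ideal.subset_span (by simp)
  apply le_antisymm
  · -- hard direction
    intro f hf
    rw [Ideal.mem_colon_span_singleton] at hf
    have hf' : f * (X 1 * X 2) ^ (t - 1) ∈ P4J K w1 w3 t := P4pow_le_J K w1 w3 I hI t hf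
    rw [P4gen_b, monomial_pow, one_pow] at hf'
    -- every exponent of f is divisible by one of the generators
    have hdiv : ∀ e ∈ f.support, P4eA w1 ≤ e ∨ P4eB ≤ e ∨ P4eC w3 ≤ e := by
      intro e he
      apply P4key w1 w3 hw3 h13 t ht
      apply hf'
      rw [mem_support_iff, coeff_mul_monomial, mul_one]
      exact mem_support_iff.mp he
    rw [f.as_sum]
    apply Ideal.sum_mem
    intro e he
    rcases hdiv e he with hle | hle | hle
    · exact P4mono_mem K hle _ (by rw [← P4gen_a]; exact haI)
    · exact P4mono_mem K hle _ (by rw [← P4gen_b]; exact hbI)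
    · exact P4mono_mem K hle _ (by rw [← P4gen_c]; exact hcI)
  · -- easy direction
    intro f hf
    rw [Ideal.mem_colon_span_singleton]
    have h1 : (X 1 * X 2 : MvPolynomial (Fin 4) K) ^ (t - 1) ∈ I ^ (t - 1) :=
      Ideal.pow_mem_pow hbI _
    have : f * (X 1 * X 2) ^ (t - 1) ∈ I * I ^ (t - 1) := Ideal.mul_mem_mul hf h1
    have ht' : I * I ^ (t - 1) = I ^ t := by
      rw [← pow_succ']
      congr 1
      omega
    rwa [ht'] at this
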